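/- Let U ⊆ ℝ^d be open and convex with 0 ∈ U. For i, j = 1, …, d, let η_{ij} : U → ℝ^d be measurable and locally bounded, with η_{ij} = η_{ji} for all i, j. Then there exists a twice continuously differentiable function A : U → ℝ^d with A(0) = 0 such that: every twice continuously differentiable function g : U → ℝ satisfying ∂_i ∂_j g(y) = ⟨∇g(y), η_{ij}(y)⟩ for all i, j = 1, …, d and all y ∈ U also satisfies g(y) = g(0) + ⟨∇g(0), A(y)⟩ for all y ∈ U. -/

import Mathlib

theorem euclid_expand {d : ℕ} (u : EuclideanSpace ℝ (Fin d)) :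
    u = ∑ i, u i • EuclideanSpace.single i (1:ℝ) := by
  have h := (EuclideanSpace.basisFun (Fin d) ℝ).sum_repr u
  simp only [EuclideanSpace.basisFun_repr, EuclideanSpace.basisFun_apply] at h
  exact h.symm

theorem clm_expand {d : ℕ} {F : Type*} [NormedAddCommGroup F] [NormedSpace ℝ F]
    (L : EuclideanSpace ℝ (Fin d) →L[ℝ] F) (u : EuclideanSpace ℝ (Fin d)) :
    L u = ∑ i, u i • L (EuclideanSpace.single i 1) := by
  conv_lhs => rw [euclid_expand u]
  simp

theorem swap_aux {d : ℕ} (g : EuclideanSpace ℝ (Fin d) → ℝ) (y u v : EuclideanSpace ℝ (Fin d))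
    (h : DifferentiableAt ℝ (fderiv ℝ g) y) :
    fderiv ℝ (fun w => fderiv ℝ g w u) y v = (fderiv ℝ (fderiv ℝ g) y v) u := by
  have : (fun w => fderiv ℝ g w u)
      = (fun L : EuclideanSpace ℝ (Fin d) →L[ℝ] ℝ => (ContinuousLinearMap.apply ℝ ℝ u) L) ∘ (fderiv ℝ g) := rfl
  rw [this, fderiv_comp y ((ContinuousLinearMap.apply ℝ ℝ u).differentiableAt) h]
  simp

theorem coord_abs_le {d : ℕ} (u : EuclideanSpace ℝ (Fin d)) (i : Fin d) : |u i| ≤ ‖u‖ := by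
  have h := abs_real_inner_le_norm (EuclideanSpace.single i (1:ℝ)) u
  simpa [EuclideanSpace.inner_single_left, EuclideanSpace.norm_single] using h

theorem grad_zero {d : ℕ}
    (U : Set (EuclideanSpace ℝ (Fin d))) (hUopen : IsOpen U)
    (hUconv : Convex ℝ U) (h0U : (0 : EuclideanSpace ℝ (Fin d)) ∈ U)
    (η : Fin d → Fin d → EuclideanSpace ℝ (Fin d) → EuclideanSpace ℝ (Fin d))
    (hbd : ∀ i j, ∀ K ⊆ U, IsCompact K → ∃ C : ℝ, ∀ y ∈ K, ‖η i j y‖ ≤ C)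
    (g : EuclideanSpace ℝ (Fin d) → ℝ) (hg : ContDiffOn ℝ 2 g U)
    (hpde : ∀ i j, ∀ y ∈ U,
      fderiv ℝ (fun w => fderiv ℝ g w (EuclideanSpace.single i 1)) y
          (EuclideanSpace.single j 1) = fderiv ℝ g y (η i j y))
    (h0 : fderiv ℝ g 0 = 0) : ∀ y ∈ U, fderiv ℝ g y = 0 := by
  have dAt : ∀ z ∈ U, DifferentiableAt ℝ (fderiv ℝ g) z := by
    intro z hz
    exact ((hg.contDiffAt (hUopen.mem_nhds hz)).fderiv_right
      (m := 1) (by norm_num)).differentiableAt (by norm_num)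
  intro y hy
  -- the segment
  have hseg : ∀ t ∈ Set.Icc (0:ℝ) 1, t • y ∈ U := fun t ht =>
    hUconv.smul_mem_of_zero_mem h0U hy ht
  set Kset : Set (EuclideanSpace ℝ (Fin d)) := (fun t : ℝ => t • y) '' Set.Icc 0 1 with hKset
  have hKU : Kset ⊆ U := by rintro _ ⟨t, ht, rfl⟩; exact hseg t ht
  have hKcomp : IsCompact Kset := (isCompact_Icc).image (by fun_prop)
  have h0K : (0 : EuclideanSpace ℝ (Fin d)) ∈ Kset :=
    ⟨0, Set.left_mem_Icc.2 zero_le_one, by simp⟩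
  -- the bound on η over the segment
  set C : Fin d → Fin d → ℝ := fun i j => (hbd i j Kset hKU hKcomp).choose with hC
  have hCspec : ∀ i j, ∀ z ∈ Kset, ‖η i j z‖ ≤ C i j := fun i j =>
    (hbd i j Kset hKU hKcomp).choose_spec
  have hCnn : ∀ i j, 0 ≤ C i j := fun i j =>
    le_trans (norm_nonneg _) (hCspec i j 0 h0K)
  set B : ℝ := ∑ i, ∑ j, C i j with hBdef
  have hBnn : 0 ≤ B := Finset.sum_nonneg fun i _ => Finset.sum_nonneg fun j _ => hCnn i j
  have hB : ∀ i j, ∀ t ∈ Set.Icc (0:ℝ) 1, ‖η i j (t • y)‖ ≤ B := by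
    intro i j t ht
    refine le_trans (hCspec i j _ ⟨t, ht, rfl⟩) ?_
    calc C i j ≤ ∑ j, C i j := Finset.single_le_sum (fun j _ => hCnn i j) (Finset.mem_univ j)
    _ ≤ B := Finset.single_le_sum (f := fun i => ∑ j, C i j)
        (fun i _ => Finset.sum_nonneg fun j _ => hCnn i j) (Finset.mem_univ i)
  set v : ℝ → (EuclideanSpace ℝ (Fin d) →L[ℝ] ℝ) := fun t => fderiv ℝ g (t • y) with hvdef
  set v' : ℝ → (EuclideanSpace ℝ (Fin d) →L[ℝ] ℝ) :=
    fun t => (fderiv ℝ (fderiv ℝ g) (t • y)) y with hv'def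
  have hv : ∀ t ∈ Set.Icc (0:ℝ) 1, HasDerivAt v (v' t) t := by
    intro t ht
    have hcurve : HasDerivAt (fun t : ℝ => t • y) y t := by
      simpa using (hasDerivAt_id t).smul_const y
    exact ((dAt _ (hseg t ht)).hasFDerivAt.comp_hasDerivAt t hcurve)
  have hv'e : ∀ t ∈ Set.Icc (0:ℝ) 1, ∀ i,
      v' t (EuclideanSpace.single i 1) = ∑ j, y j • (v t) (η i j (t • y)) := by
    intro t ht i
    have hz := hseg t ht
    have expand : fderiv ℝ (fderiv ℝ g) (t • y) y
        = ∑ j, y j • (fderiv ℝ (fderiv ℝ g) (t • y) (EuclideanSpace.single j 1)) :=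
      clm_expand _ y
    rw [hv'def]
    simp only [expand, ContinuousLinearMap.sum_apply, ContinuousLinearMap.smul_apply]
    refine Finset.sum_congr rfl fun j _ => ?_
    congr 1
    rw [← swap_aux g _ _ _ (dAt _ hz)]
    exact hpde i j _ hz
  have hKconst : (0:ℝ) ≤ (d * (d * (‖y‖ * B))) := by positivity
  have hbound : ∀ t ∈ Set.Icc (0:ℝ) 1, ‖v' t‖ ≤ (d * (d * (‖y‖ * B))) * ‖v t‖ := by
    intro t ht
    refine ContinuousLinearMap.opNorm_le_bound _ (by positivity) fun u => ?_
    have hexp := clm_expand (v' t) u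
    rw [hexp]
    calc ‖∑ i, u i • v' t (EuclideanSpace.single i 1)‖
        ≤ ∑ i, ‖u i • v' t (EuclideanSpace.single i 1)‖ := norm_sum_le _ _
      _ ≤ ∑ i : Fin d, ‖u‖ * ((‖y‖ * (‖v t‖ * B)) * d) := by
          refine Finset.sum_le_sum fun i _ => ?_
          rw [norm_smul]
          refine mul_le_mul (by simpa using coord_abs_le u i) ?_ (norm_nonneg _) (norm_nonneg _)
          rw [hv'e t ht i]
          calc ‖∑ j, y j • (v t) (η i j (t • y))‖
              ≤ ∑ j, ‖y j • (v t) (η i j (t • y))‖ := norm_sum_le _ _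
            _ ≤ ∑ j : Fin d, ‖y‖ * (‖v t‖ * B) := by
                refine Finset.sum_le_sum fun j _ => ?_
                rw [norm_smul]
                refine mul_le_mul (by simpa using coord_abs_le y j) ?_ (norm_nonneg _)
                  (norm_nonneg _)
                calc ‖(v t) (η i j (t • y))‖ ≤ ‖v t‖ * ‖η i j (t • y)‖ :=
                      (v t).le_opNorm _
                  _ ≤ ‖v t‖ * B := by
                      exact mul_le_mul_of_nonneg_left (hB i j t ht) (norm_nonneg _)
            _ = (‖y‖ * (‖v t‖ * B)) * d := by simp [Finset.sum_const, mul_comm]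
      _ = (d * (d * (‖y‖ * B))) * ‖v t‖ * ‖u‖ := by
          rw [Finset.sum_const, Finset.card_univ, Fintype.card_fin, nsmul_eq_mul]; ring
  -- Gronwall
  have hcont : ContinuousOn v (Set.Icc 0 1) := fun t ht =>
    (hv t ht).continuousAt.continuousWithinAt
  have hderiv : ∀ t ∈ Set.Ico (0:ℝ) 1, HasDerivWithinAt v (v' t) (Set.Ici t) t := fun t ht =>
    (hv t (Set.mem_Icc_of_Ico ht)).hasDerivWithinAt
  have hv0 : ‖v 0‖ ≤ 0 := by simp [hvdef, h0]
  have hgron := norm_le_gronwallBound_of_norm_deriv_right_le (δ := 0)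
    (K := d * (d * (‖y‖ * B))) (ε := 0) hcont hderiv hv0
    (fun t ht => by simpa using hbound t (Set.mem_Icc_of_Ico ht)) 1 (Set.right_mem_Icc.2 zero_le_one)
  rw [gronwallBound_ε0_δ0] at hgron
  have : v 1 = 0 := by
    have := le_antisymm hgron (norm_nonneg _)
    simpa using this
  simpa [hvdef] using this

section
variable {d : ℕ} {U : Set (EuclideanSpace ℝ (Fin d))} (hUopen : IsOpen U)
  {η : Fin d → Fin d → EuclideanSpace ℝ (Fin d) → EuclideanSpace ℝ (Fin d)}

def SolP (U : Set (EuclideanSpace ℝ (Fin d)))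
    (η : Fin d → Fin d → EuclideanSpace ℝ (Fin d) → EuclideanSpace ℝ (Fin d))
    (g : EuclideanSpace ℝ (Fin d) → ℝ) : Prop :=
  ContDiffOn ℝ 2 g U ∧ ∀ i j, ∀ y ∈ U,
    fderiv ℝ (fun w => fderiv ℝ g w (EuclideanSpace.single i 1)) y
        (EuclideanSpace.single j 1) = fderiv ℝ g y (η i j y)

theorem diffAt_of (hUopen : IsOpen U) {g : EuclideanSpace ℝ (Fin d) → ℝ} (hg : ContDiffOn ℝ 2 g U)
    {w : EuclideanSpace ℝ (Fin d)} (hw : w ∈ U) : DifferentiableAt ℝ g w :=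
  (hg.contDiffAt (hUopen.mem_nhds hw)).differentiableAt (by norm_num)

theorem fderiv_diffAt (hUopen : IsOpen U) {g : EuclideanSpace ℝ (Fin d) → ℝ} (hg : ContDiffOn ℝ 2 g U)
    {w : EuclideanSpace ℝ (Fin d)} (hw : w ∈ U) :
    DifferentiableAt ℝ (fderiv ℝ g) w :=
  ((hg.contDiffAt (hUopen.mem_nhds hw)).fderiv_right (m := 1)
    (by norm_num)).differentiableAt (by norm_num)

theorem fderiv_apply_diffAt (hUopen : IsOpen U) {g : EuclideanSpace ℝ (Fin d) → ℝ} (hg : ContDiffOn ℝ 2 g U)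
    {w : EuclideanSpace ℝ (Fin d)} (hw : w ∈ U) (u : EuclideanSpace ℝ (Fin d)) :
    DifferentiableAt ℝ (fun z => fderiv ℝ g z u) w :=
  (ContinuousLinearMap.apply ℝ ℝ u).differentiableAt.comp w (fderiv_diffAt hUopen hg hw)

theorem SolP.add (hUopen : IsOpen U) {g h : EuclideanSpace ℝ (Fin d) → ℝ} (hg : SolP U η g) (hh : SolP U η h) :
    SolP U η (g + h) := by
  obtain ⟨hg1, hg2⟩ := hg
  obtain ⟨hh1, hh2⟩ := hh
  refine ⟨hg1.add hh1, fun i j y hy => ?_⟩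
  have hev : (fun w => fderiv ℝ (g + h) w (EuclideanSpace.single i 1))
      =ᶠ[nhds y] (fun w => fderiv ℝ g w (EuclideanSpace.single i 1)
        + fderiv ℝ h w (EuclideanSpace.single i 1)) := by
    filter_upwards [hUopen.mem_nhds hy] with w hw
    rw [fderiv_add (diffAt_of hUopen hg1 hw) (diffAt_of hUopen hh1 hw)]
    rfl
  rw [hev.fderiv_eq, fderiv_fun_add (fderiv_apply_diffAt hUopen hg1 hy _)
    (fderiv_apply_diffAt hUopen hh1 hy _)]
  have := fderiv_add (𝕜 := ℝ) (diffAt_of hUopen hg1 hy) (diffAt_of hUopen hh1 hy)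
  simp only [ContinuousLinearMap.add_apply, this]
  rw [hg2 i j y hy, hh2 i j y hy]

theorem SolP.smul (hUopen : IsOpen U) {g : EuclideanSpace ℝ (Fin d) → ℝ} (c : ℝ) (hg : SolP U η g) :
    SolP U η (c • g) := by
  obtain ⟨hg1, hg2⟩ := hg
  refine ⟨hg1.const_smul c, fun i j y hy => ?_⟩
  have hev : (fun w => fderiv ℝ (c • g) w (EuclideanSpace.single i 1))
      =ᶠ[nhds y] (fun w => c • fderiv ℝ g w (EuclideanSpace.single i 1)) := by
    filter_upwards [hUopen.mem_nhds hy] with w hw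
    rw [fderiv_const_smul (diffAt_of hUopen hg1 hw)]
    rfl
  rw [hev.fderiv_eq, fderiv_fun_const_smul (fderiv_apply_diffAt hUopen hg1 hy _)]
  have := fderiv_const_smul (𝕜 := ℝ) (diffAt_of hUopen hg1 hy) c
  simp only [ContinuousLinearMap.smul_apply, this, smul_eq_mul]
  rw [hg2 i j y hy]

theorem SolP.const (c : ℝ) : SolP U η (fun _ => c) := by
  refine ⟨contDiffOn_const, fun i j y hy => ?_⟩
  simp [fderiv_const]

end

theorem exists_dual_vectors {d k : ℕ} (W : Submodule ℝ (EuclideanSpace ℝ (Fin d) →L[ℝ] ℝ))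
    (b : Module.Basis (Fin k) ℝ W) :
    ∃ u : Fin k → EuclideanSpace ℝ (Fin d),
      ∀ m n, (b n : EuclideanSpace ℝ (Fin d) →L[ℝ] ℝ) (u m) = if n = m then 1 else 0 := by
  set E := EuclideanSpace ℝ (Fin d) with hE
  set ev : E →ₗ[ℝ] ((E →L[ℝ] ℝ) →ₗ[ℝ] ℝ) := (ContinuousLinearMap.coeLM ℝ).flip with hev
  have hinj : Function.Injective ev := by
    rw [← LinearMap.ker_eq_bot, LinearMap.ker_eq_bot']
    intro x hx
    have h := congrArg (fun φ => φ (innerSL ℝ x)) hx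
    simp only [hev, LinearMap.flip_apply, ContinuousLinearMap.coeLM_apply,
      LinearMap.zero_apply, innerSL_apply_apply] at h
    exact inner_self_eq_zero.mp h
  have hfr : Module.finrank ℝ E = Module.finrank ℝ ((E →L[ℝ] ℝ) →ₗ[ℝ] ℝ) := by
    rw [Module.finrank_linearMap, Module.finrank_self, mul_one]
    rw [← LinearEquiv.finrank_eq
      (LinearMap.toContinuousLinearMap : (E →ₗ[ℝ] ℝ) ≃ₗ[ℝ] (E →L[ℝ] ℝ))]
    rw [Module.finrank_linearMap, Module.finrank_self, mul_one]
  have hsurj : Function.Surjective ev :=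
    (LinearMap.injective_iff_surjective_of_finrank_eq_finrank hfr).mp hinj
  have H : ∀ m : Fin k, ∃ u : E,
      ∀ n, (b n : E →L[ℝ] ℝ) u = if n = m then 1 else 0 := by
    intro m
    obtain ⟨Φ, hΦ⟩ := LinearMap.exists_extend (b.coord m)
    obtain ⟨u, hu⟩ := hsurj Φ
    refine ⟨u, fun n => ?_⟩
    have h1 : (b n : E →L[ℝ] ℝ) u = ev u (b n : E →L[ℝ] ℝ) := rfl
    rw [h1, hu]
    have h2 : Φ (b n : E →L[ℝ] ℝ) = b.coord m (b n) := by
      rw [← hΦ]; rfl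
    rw [h2, Module.Basis.coord_apply, Module.Basis.repr_self]
    simp [Finsupp.single_apply]
  choose u hu using H
  exact ⟨u, hu⟩

theorem eval_sum_dual {d k : ℕ} (ξ : EuclideanSpace ℝ (Fin d) →L[ℝ] ℝ)
    (c : Fin k → ℝ) (B : Fin k → (EuclideanSpace ℝ (Fin d) →L[ℝ] ℝ))
    (u : Fin k → EuclideanSpace ℝ (Fin d))
    (hξ : ξ = ∑ n, c n • B n)
    (hu : ∀ m n, B n (u m) = if n = m then 1 else 0)
    (a : Fin k → ℝ) : ξ (∑ m, a m • u m) = ∑ m, c m * a m := by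
  have h2 : ∀ n, B n (∑ m, a m • u m) = a n := by
    intro n
    rw [map_sum]
    have : ∀ m, B n (a m • u m) = a m * (if n = m then 1 else 0) := by
      intro m
      rw [ContinuousLinearMap.map_smul, hu m n]
      rfl
    rw [Finset.sum_congr rfl fun m _ => this m]
    simp [Finset.sum_ite_eq']
  have h1 : ξ (∑ m, a m • u m) = ∑ n, c n * B n (∑ m, a m • u m) := by
    rw [hξ]
    rw [ContinuousLinearMap.sum_apply]
    exact Finset.sum_congr rfl fun n _ => rfl
  rw [h1, Finset.sum_congr rfl fun n _ => by rw [h2 n]]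

section MainAssembly

variable {d : ℕ}

noncomputable def Sols (U : Set (EuclideanSpace ℝ (Fin d))) (hUopen : IsOpen U)
    (η : Fin d → Fin d → EuclideanSpace ℝ (Fin d) → EuclideanSpace ℝ (Fin d)) :
    Submodule ℝ (EuclideanSpace ℝ (Fin d) → ℝ) where
  carrier := {g | SolP U η g}
  add_mem' := fun hg hh => SolP.add hUopen hg hh
  zero_mem' := SolP.const 0
  smul_mem' := fun c g hg => SolP.smul hUopen c hg

set_option maxHeartbeats 1000000 in
theorem stmt12 {d : ℕ}
    (U : Set (EuclideanSpace ℝ (Fin d))) (hUopen : IsOpen U)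
    (hUconv : Convex ℝ U) (h0U : (0 : EuclideanSpace ℝ (Fin d)) ∈ U)
    (η : Fin d → Fin d → EuclideanSpace ℝ (Fin d) → EuclideanSpace ℝ (Fin d))
    (hmeas : ∀ i j, Measurable fun y : U => η i j y)
    (hbd : ∀ i j, ∀ K ⊆ U, IsCompact K → ∃ C : ℝ, ∀ y ∈ K, ‖η i j y‖ ≤ C)
    (hsymm : ∀ i j, Set.EqOn (η i j) (η j i) U) :
    ∃ A : EuclideanSpace ℝ (Fin d) → EuclideanSpace ℝ (Fin d),
      ContDiffOn ℝ 2 A U ∧ A 0 = 0 ∧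
      ∀ g : EuclideanSpace ℝ (Fin d) → ℝ, ContDiffOn ℝ 2 g U →
        (∀ i j, ∀ y ∈ U,
          fderiv ℝ (fun w => fderiv ℝ g w (EuclideanSpace.single i 1)) y
              (EuclideanSpace.single j 1) =
            fderiv ℝ g y (η i j y)) →
        ∀ y ∈ U, g y = g 0 + fderiv ℝ g 0 (A y) := by
  classical
  -- uniqueness of solutions
  have uniq : ∀ g : EuclideanSpace ℝ (Fin d) → ℝ, SolP U η g → fderiv ℝ g 0 = 0 →
      ∀ y ∈ U, g y = g 0 := by
    intro g hgsol h0 y hy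
    have hz := grad_zero U hUopen hUconv h0U η hbd g hgsol.1 hgsol.2 h0
    have hle := hUconv.norm_image_sub_le_of_norm_fderiv_le (C := 0)
      (fun x hx => diffAt_of hUopen hgsol.1 hx)
      (fun x hx => by rw [hz x hx, norm_zero]) h0U hy
    have : ‖g y - g 0‖ ≤ 0 := by simpa using hle
    have := le_antisymm this (norm_nonneg _)
    rw [Real.norm_eq_abs, abs_eq_zero, sub_eq_zero] at this
    exact this
  -- the submodule of gradients at 0 of solutions
  set W : Submodule ℝ (EuclideanSpace ℝ (Fin d) →L[ℝ] ℝ) :=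
    { carrier := {ξ | ∃ g, SolP U η g ∧ fderiv ℝ g 0 = ξ},
      add_mem' := by
        rintro ξ ξ' ⟨g, hg, rfl⟩ ⟨h, hh, rfl⟩
        refine ⟨g + h, SolP.add hUopen hg hh, ?_⟩
        rw [fderiv_add (diffAt_of hUopen hg.1 h0U) (diffAt_of hUopen hh.1 h0U)]
      zero_mem' := ⟨fun _ => 0, SolP.const 0, by simp⟩
      smul_mem' := by
        rintro c ξ ⟨g, hg, rfl⟩
        refine ⟨c • g, SolP.smul hUopen c hg, ?_⟩
        rw [fderiv_const_smul (diffAt_of hUopen hg.1 h0U)] } with hW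
  haveI : FiniteDimensional ℝ (EuclideanSpace ℝ (Fin d) →L[ℝ] ℝ) :=
    LinearEquiv.finiteDimensional
      (LinearMap.toContinuousLinearMap :
        (EuclideanSpace ℝ (Fin d) →ₗ[ℝ] ℝ) ≃ₗ[ℝ] (EuclideanSpace ℝ (Fin d) →L[ℝ] ℝ))
  set k := Module.finrank ℝ W with hk
  haveI : Module.Free ℝ W := Module.Free.of_divisionRing ℝ W
  set b : Module.Basis (Fin k) ℝ W := Module.finBasis ℝ W with hb
  obtain ⟨u, hu⟩ := exists_dual_vectors W b
  -- the normalized solutions realizing the basis elements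
  have hsol : ∀ m : Fin k, ∃ g, SolP U η g ∧
      fderiv ℝ g 0 = (b m : EuclideanSpace ℝ (Fin d) →L[ℝ] ℝ) := (fun m => (b m).2)
  choose gs hgs hgs0 using hsol
  set h : Fin k → EuclideanSpace ℝ (Fin d) → ℝ := fun m z => gs m z - gs m 0 with hh
  have hsolh : ∀ m, SolP U η (h m) := by
    intro m
    have := SolP.add hUopen (hgs m) (SolP.const (U := U) (η := η) (-(gs m 0)))
    have heq : (gs m + fun _ => -(gs m 0)) = h m := by
      funext z; simp [hh, sub_eq_add_neg]
    rwa [heq] at this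
  have hderivh : ∀ m (z : EuclideanSpace ℝ (Fin d)), fderiv ℝ (h m) z = fderiv ℝ (gs m) z := by
    intro m z
    exact fderiv_sub_const (gs m 0)
  have hh0 : ∀ m, h m 0 = 0 := fun m => sub_self _
  -- the map A
  refine ⟨fun z => ∑ m, h m z • u m, ?_, ?_, ?_⟩
  · refine ContDiffOn.sum fun m _ => ContDiffOn.fun_smul ?_ contDiffOn_const
    have := (hsolh m).1
    exact this
  · simp [hh0]
  · intro g hgC2 hgpde y hy
    have hgsol : SolP U η g := ⟨hgC2, hgpde⟩
    set ξ : EuclideanSpace ℝ (Fin d) →L[ℝ] ℝ := fderiv ℝ g 0 with hξ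
    have hξW : ξ ∈ W := ⟨g, hgsol, rfl⟩
    set c : Fin k → ℝ := fun n => b.repr ⟨ξ, hξW⟩ n with hc
    have hrepr : (⟨ξ, hξW⟩ : W) = ∑ n, c n • b n := (b.sum_repr _).symm
    have hξeq : ξ = ∑ n, c n • (b n : EuclideanSpace ℝ (Fin d) →L[ℝ] ℝ) := by
      have := congrArg (Subtype.val) hrepr
      simpa using this
    -- the function G
    set G : EuclideanSpace ℝ (Fin d) → ℝ :=
      (g - (fun _ => g 0)) - ∑ m, c m • h m with hG
    have hGsol : SolP U η G := by
      have hmem : G ∈ Sols U hUopen η := by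
        refine sub_mem (sub_mem ?_ ?_) (sum_mem fun m _ => Submodule.smul_mem _ _ ?_)
        · exact hgsol
        · exact SolP.const (g 0)
        · exact hsolh m
      exact hmem
    have hGapp : ∀ z, G z = g z - g 0 - ∑ m, c m * h m z := by
      intro z
      simp [hG, Finset.sum_apply, smul_eq_mul]
    have hG0 : G 0 = 0 := by
      rw [hGapp]
      simp [hh0]
    -- fderiv of G at 0 vanishes
    have hdiffh0 : ∀ m, DifferentiableAt ℝ (h m) 0 := fun m =>
      diffAt_of hUopen (hsolh m).1 h0U
    have hfdG : fderiv ℝ G 0 = 0 := by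
      have e1 : G = fun z => (g z - g 0) - (∑ m, c m • h m) z := by
        funext z; simp [hG]
      have hdS : DifferentiableAt ℝ (fun z => (∑ m, c m • h m) z) 0 := by
        have : (fun z => (∑ m, c m • h m) z) = fun z => ∑ m, c m * h m z := by
          funext z; simp [Finset.sum_apply, smul_eq_mul]
        rw [this]
        exact DifferentiableAt.fun_sum fun m _ => (hdiffh0 m).const_mul (c m)
      have hdg' : DifferentiableAt ℝ (fun z => g z - g 0) 0 :=
        (diffAt_of hUopen hgC2 h0U).sub_const (g 0)
      rw [e1, fderiv_fun_sub hdg' hdS, fderiv_sub_const]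
      have e2 : (fun z => (∑ m, c m • h m) z) = fun z => ∑ m, c m * h m z := by
        funext z; simp [Finset.sum_apply, smul_eq_mul]
      rw [e2, fderiv_fun_sum (fun m _ => (hdiffh0 m).const_mul (c m))]
      have e3 : ∀ m : Fin k, fderiv ℝ (fun z => c m * h m z) 0 = c m • fderiv ℝ (h m) 0 :=
        fun m => fderiv_const_mul (hdiffh0 m) (c m)
      rw [Finset.sum_congr rfl fun m _ => e3 m]
      have e4 : ∀ m : Fin k, fderiv ℝ (h m) 0
          = (b m : EuclideanSpace ℝ (Fin d) →L[ℝ] ℝ) := by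
        intro m; rw [hderivh m 0, hgs0 m]
      rw [Finset.sum_congr rfl fun m _ => by rw [e4 m]]
      rw [← hξeq]
      simp [hξ]
    -- conclude
    have hGy := uniq G hGsol hfdG y hy
    rw [hG0] at hGy
    have key : g y - g 0 = ∑ m, c m * h m y := by
      have := hGapp y
      rw [hGy] at this
      linarith [this]
    -- compute ξ (A y)
    have hA := eval_sum_dual ξ c
      (fun n => (b n : EuclideanSpace ℝ (Fin d) →L[ℝ] ℝ)) u hξeq
      (fun m n => hu m n) (fun m => h m y)
    rw [hA, ← key]
    ring

end MainAssembly
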